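/- Let E be a real inner product space, f : E → ℝ continuously differentiable with ‖∇f(x)‖ ≤ 1 for all x ∈ E, let b > 0, and let γ : [0,b] → E be any C¹ curve. Then ‖γ(b) − γ(0)‖² ≤ 4b·∫₀^b ( (1/2)‖γ'(u) − 2u·∇f(γ(u))‖² + 2u²(1 − ‖∇f(γ(u))‖²) ) du + (8/3)b⁴. (Displacement bound for curves in terms of their reparametrized L-length, obtained by combining the Cauchy–Schwarz inequality with the energy bound; used in the proof of Lemma 2.4.) -/

import Mathlib

open Set MeasureTheory

/-- (Displacement bound used in the proof of Lemma 2.4.) For any C¹ curve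
`γ : [0,b] → E` and `‖∇f‖ ≤ 1`,
`‖γ(b) − γ(0)‖² ≤ 4b ∫₀ᵇ ( ½‖γ' − 2u∇f(γ)‖² + 2u²(1 − ‖∇f(γ)‖²) ) + (8/3)b⁴`. -/
theorem displacement_le_L_length
    {E : Type*} [NormedAddCommGroup E] [InnerProductSpace ℝ E] [CompleteSpace E]
    (f : E → ℝ) (hf : ContDiff ℝ 1 f) (hgrad : ∀ x, ‖gradient f x‖ ≤ 1)
    (b : ℝ) (hb : 0 < b) (γ γ' : ℝ → E)
    (hγ : ∀ u ∈ Icc (0:ℝ) b, HasDerivWithinAt γ (γ' u) (Icc (0:ℝ) b) u)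
    (hγ' : ContinuousOn γ' (Icc (0:ℝ) b)) :
    ‖γ b - γ 0‖ ^ 2
      ≤ 4 * b * (∫ u in (0:ℝ)..b,
          ((1/2) * ‖γ' u - (2 * u) • gradient f (γ u)‖ ^ 2
            + 2 * u ^ 2 * (1 - ‖gradient f (γ u)‖ ^ 2)))
        + (8/3) * b ^ 4 := by
  have hgc : Continuous (gradient f) := by
    have h1 := hf.continuous_fderiv one_ne_zero
    exact ((InnerProductSpace.toDual ℝ E).symm.continuous).comp h1
  have hγc : ContinuousOn γ (Icc 0 b) := fun u hu => (hγ u hu).continuousWithinAt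
  have hXc : ContinuousOn (fun u => gradient f (γ u)) (Icc 0 b) :=
    hgc.comp_continuousOn hγc
  set g : ℝ → ℝ := fun u =>
    (1/2) * ‖γ' u - (2 * u) • gradient f (γ u)‖ ^ 2
      + 2 * u ^ 2 * (1 - ‖gradient f (γ u)‖ ^ 2) with hg
  have hgcont : ContinuousOn g (Icc 0 b) := by
    apply ContinuousOn.add
    · exact continuousOn_const.mul ((hγ'.sub (((continuous_const.mul
        continuous_id).continuousOn).smul hXc)).norm.pow 2)
    · exact (continuousOn_const.mul ((continuous_pow 2).continuousOn)).mul
        (continuousOn_const.sub (hXc.norm.pow 2))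
  have hIγ' : IntervalIntegrable γ' volume 0 b := by
    apply ContinuousOn.intervalIntegrable; rwa [uIcc_of_le hb.le]
  have hInorm : IntervalIntegrable (fun u => ‖γ' u‖) volume 0 b := hIγ'.norm
  have hInorm2 : IntervalIntegrable (fun u => ‖γ' u‖ ^ 2) volume 0 b := by
    apply ContinuousOn.intervalIntegrable; rw [uIcc_of_le hb.le]
    exact hγ'.norm.pow 2
  have hIg : IntervalIntegrable g volume 0 b := by
    apply ContinuousOn.intervalIntegrable; rwa [uIcc_of_le hb.le]
  -- FTC
  have hFTC : ∫ u in (0:ℝ)..b, γ' u = γ b - γ 0 := by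
    apply intervalIntegral.integral_eq_sub_of_hasDeriv_right_of_le hb.le hγc _ hIγ'
    intro x hx
    exact (hγ x (Ioo_subset_Icc_self hx)).mono_of_mem_nhdsWithin
      (Icc_mem_nhdsGT_of_mem ⟨hx.1.le, hx.2⟩)
  set S := ‖γ b - γ 0‖ with hS
  set A := ∫ u in (0:ℝ)..b, ‖γ' u‖ with hA
  set J := ∫ u in (0:ℝ)..b, ‖γ' u‖ ^ 2 with hJ
  set I := ∫ u in (0:ℝ)..b, g u with hI
  have h1 : S ≤ A := by
    rw [hS, ← hFTC]
    exact intervalIntegral.norm_integral_le_integral_norm hb.le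
  have hJ0 : 0 ≤ J := by
    apply intervalIntegral.integral_nonneg hb.le
    intro u _; positivity
  -- Cauchy-Schwarz via AM-GM
  have h2 : ∀ lam : ℝ, 0 < lam → A ≤ lam * b / 2 + (1 / (2 * lam)) * J := by
    intro lam hlam
    have step : A ≤ ∫ u in (0:ℝ)..b, (lam / 2 + (1 / (2 * lam)) * ‖γ' u‖ ^ 2) := by
      apply intervalIntegral.integral_mono_on hb.le hInorm
      · exact (intervalIntegrable_const).add (hInorm2.const_mul _)
      · intro u _
        have e : lam / 2 + 1 / (2 * lam) * ‖γ' u‖ ^ 2 - ‖γ' u‖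
            = (‖γ' u‖ - lam) ^ 2 / (2 * lam) := by
          field_simp; ring
        have e2 : 0 ≤ (‖γ' u‖ - lam) ^ 2 / (2 * lam) := by positivity
        linarith
    calc A ≤ _ := step
      _ = lam * b / 2 + (1 / (2 * lam)) * J := by
        rw [intervalIntegral.integral_add intervalIntegrable_const (hInorm2.const_mul _),
          intervalIntegral.integral_const, intervalIntegral.integral_const_mul]
        simp only [smul_eq_mul]; ring
  have hSJ : S ^ 2 ≤ b * J := by
    rcases eq_or_lt_of_le (norm_nonneg (γ b - γ 0)) with h0 | hSpos
    · have hS0 : S = 0 := hS.trans h0.symm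
      rw [hS0]
      nlinarith [mul_nonneg hb.le hJ0]
    · have hlam : 0 < S / b := div_pos hSpos hb
      have h3 := h2 (S / b) hlam
      have hb' : b ≠ 0 := hb.ne'
      have hS' : S ≠ 0 := hSpos.ne'
      rw [div_mul_cancel₀ _ hb'] at h3
      have h4 : S ≤ A := h1
      have key : S ≤ S / 2 + (1 / (2 * (S / b))) * J := le_trans h4 h3
      have : (1 / (2 * (S / b))) * J = b * J / (2 * S) := by
        field_simp
      rw [this] at key
      have h5 : S / 2 ≤ b * J / (2 * S) := by linarith
      have h6 : S * (2 * S) ≤ b * J * 2 :=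
        (div_le_div_iff₀ (by norm_num) (by positivity)).mp h5
      nlinarith
  -- pointwise bound on the energy density
  have hpt : ∀ u ∈ Icc (0:ℝ) b, ‖γ' u‖ ^ 2 ≤ 4 * g u + 8 * u ^ 2 := by
    intro u hu
    set d := γ' u - (2 * u) • gradient f (γ u) with hd
    have hX1 : ‖gradient f (γ u)‖ ≤ 1 := hgrad (γ u)
    have htri : ‖γ' u‖ ≤ ‖d‖ + 2 * u := by
      have h7 : γ' u = d + (2 * u) • gradient f (γ u) := by rw [hd]; abel
      calc ‖γ' u‖ = ‖d + (2 * u) • gradient f (γ u)‖ := by rw [← h7]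
        _ ≤ ‖d‖ + ‖(2 * u) • gradient f (γ u)‖ := norm_add_le _ _
        _ ≤ ‖d‖ + 2 * u := by
            rw [norm_smul, Real.norm_eq_abs, abs_of_nonneg (by linarith [hu.1])]
            nlinarith [norm_nonneg (gradient f (γ u)), hu.1]
    have hgu : g u = (1/2) * ‖d‖ ^ 2 + 2 * u ^ 2 * (1 - ‖gradient f (γ u)‖ ^ 2) := rfl
    rw [hgu]
    nlinarith [sq_nonneg (‖d‖ - 2 * u), norm_nonneg d, norm_nonneg (γ' u), hu.1,
      norm_nonneg (gradient f (γ u)), sq_nonneg u,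
      mul_nonneg (mul_nonneg (by norm_num : (0:ℝ) ≤ 2) (sq_nonneg u))
        (sub_nonneg.mpr (by nlinarith [norm_nonneg (gradient f (γ u))] :
          ‖gradient f (γ u)‖ ^ 2 ≤ 1))]
  have hJI : J ≤ 4 * I + (8/3) * b ^ 3 := by
    have step : J ≤ ∫ u in (0:ℝ)..b, (4 * g u + 8 * u ^ 2) := by
      apply intervalIntegral.integral_mono_on hb.le hInorm2
      · apply IntervalIntegrable.add (hIg.const_mul 4)
        apply ContinuousOn.intervalIntegrable
        exact (continuous_const.mul (continuous_pow 2)).continuousOn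
      · exact hpt
    calc J ≤ _ := step
      _ = 4 * I + (8/3) * b ^ 3 := by
        rw [intervalIntegral.integral_add (hIg.const_mul 4)
          (by apply ContinuousOn.intervalIntegrable
              exact (continuous_const.mul (continuous_pow 2)).continuousOn),
          intervalIntegral.integral_const_mul, intervalIntegral.integral_const_mul,
          integral_pow]
        ring
  calc S ^ 2 ≤ b * J := hSJ
    _ ≤ b * (4 * I + (8/3) * b ^ 3) := by
        exact mul_le_mul_of_nonneg_left hJI hb.le
    _ = 4 * b * I + (8/3) * b ^ 4 := by ring
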